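/- Let T be an ergodic invertible measure-preserving transformation of a probability space (X,μ), A an abelian Polish group (written multiplicatively), and φ, ψ : X → A measurable cocycles that are cohomologous, i.e., ψ(x) = φ(x)·f(x)·f(Tx)⁻¹ for a measurable f : X → A. If φ is recurrent then ψ is recurrent. -/

import Mathlib

open MeasureTheory Filter

/-- The `n`-th iterate `φ⁽ⁿ⁾(x) = φ(x)·φ(Tx)·…·φ(Tⁿ⁻¹x)` of a cocycle. -/
noncomputable def cocycleIterate {X A : Type*} [CommGroup A] (T : X → X) (φ : X → A)
    (n : ℕ) (x : X) : A :=
  ∏ i ∈ Finset.range n, φ (T^[i] x)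

/-- A cocycle `φ : X → A` over `T` is recurrent if for every set `B` of positive measure and
every neighbourhood `V` of `1 ∈ A` there is `N ≥ 1` with
`μ(B ∩ T⁻ᴺB ∩ {φ⁽ᴺ⁾ ∈ V}) > 0`. -/
def IsRecurrentCocycle {X A : Type*} [MeasurableSpace X] (μ : Measure X)
    [CommGroup A] [TopologicalSpace A] (T : X → X) (φ : X → A) : Prop :=
  ∀ B : Set X, MeasurableSet B → 0 < μ B → ∀ V ∈ nhds (1 : A),
    ∃ N : ℕ, 0 < N ∧
      0 < μ (B ∩ (T^[N]) ⁻¹' B ∩ {x | cocycleIterate T φ N x ∈ V})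

/-- If two cocycles `φ, ψ : X → A` over an ergodic invertible measure-preserving `T`, with
values in an abelian Polish group, are cohomologous (`ψ = φ · f · (f∘T)⁻¹`) and `φ` is
recurrent, then `ψ` is recurrent. -/
theorem recurrent_of_cohomologous
    {X A : Type*} [MeasurableSpace X] (μ : Measure X) [IsProbabilityMeasure μ]
    [CommGroup A] [TopologicalSpace A] [IsTopologicalGroup A] [PolishSpace A]
    [MeasurableSpace A] [BorelSpace A]
    (T Tinv : X → X) (hT : MeasurePreserving T μ μ) (hTinv : MeasurePreserving Tinv μ μ)
    (hinv₁ : ∀ x, Tinv (T x) = x) (hinv₂ : ∀ x, T (Tinv x) = x)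
    (herg : Ergodic T μ)
    (φ ψ : X → A) (hφ : Measurable φ) (hψ : Measurable ψ)
    (f : X → A) (hf : Measurable f)
    (hcoh : ∀ᵐ x ∂μ, ψ x = φ x * f x * (f (T x))⁻¹)
    (hrec : IsRecurrentCocycle μ T φ) :
    IsRecurrentCocycle μ T ψ := by
  -- a.e. telescoping identity for the iterated cocycles
  have hae : ∀ᵐ x ∂μ, ∀ n : ℕ,
      cocycleIterate T ψ n x = cocycleIterate T φ n x * (f x / f (T^[n] x)) := by
    have h1 : ∀ᵐ x ∂μ, ∀ i : ℕ,
        ψ (T^[i] x) = φ (T^[i] x) * (f (T^[i] x) / f (T^[i + 1] x)) := by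
      rw [MeasureTheory.ae_all_iff]
      intro i
      have hqmp := ((hT.iterate i).quasiMeasurePreserving).ae hcoh
      filter_upwards [hqmp] with x hx
      rw [Function.iterate_succ_apply']
      rw [hx, mul_assoc, ← div_eq_mul_inv]
    filter_upwards [h1] with x hx n
    unfold cocycleIterate
    calc ∏ i ∈ Finset.range n, ψ (T^[i] x)
        = ∏ i ∈ Finset.range n, (φ (T^[i] x) * (f (T^[i] x) / f (T^[i + 1] x))) :=
          Finset.prod_congr rfl fun i _ => hx i
      _ = (∏ i ∈ Finset.range n, φ (T^[i] x)) *
            ∏ i ∈ Finset.range n, (f (T^[i] x) / f (T^[i + 1] x)) :=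
          Finset.prod_mul_distrib
      _ = (∏ i ∈ Finset.range n, φ (T^[i] x)) * (f x / f (T^[n] x)) := by
          rw [Finset.prod_range_div' (fun i => f (T^[i] x)) n]
          simp
  intro B hB hBpos V hV
  -- split the neighbourhood V
  have hcont : Continuous fun p : A × A × A => p.1 * p.2.1 / p.2.2 := by fun_prop
  have hmem : (fun p : A × A × A => p.1 * p.2.1 / p.2.2) ⁻¹' V ∈
      nhds (((1 : A), (1 : A), (1 : A))) := by
    apply hcont.continuousAt.preimage_mem_nhds
    simpa using hV
  rw [mem_nhds_prod_iff] at hmem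
  obtain ⟨W, hW, t, ht, hsub⟩ := hmem
  rw [mem_nhds_prod_iff] at ht
  obtain ⟨U1, hU1, U2, hU2, hsub2⟩ := ht
  obtain ⟨O, hOsub, hOopen, hO1⟩ := mem_nhds_iff.1 (Filter.inter_mem hU1 hU2)
  have key : ∀ w ∈ W, ∀ u ∈ O, ∀ u' ∈ O, w * u / u' ∈ V := by
    intro w hw u hu u' hu'
    have hmem' : ((w, u, u') : A × A × A) ∈ W ×ˢ t :=
      ⟨hw, hsub2 ⟨(hOsub hu).1, (hOsub hu').2⟩⟩
    exact hsub hmem'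
  -- find a positive-measure piece of B on which f is nearly constant
  obtain ⟨D, hDc, hDd⟩ := TopologicalSpace.exists_countable_dense A
  set C : A → Set X := fun a => B ∩ f ⁻¹' ((fun y => a⁻¹ * y) ⁻¹' O) with hC
  have hCmeas : ∀ a, MeasurableSet (C a) := by
    intro a
    exact hB.inter (hf ((measurable_const_mul a⁻¹) hOopen.measurableSet))
  have hcover : B ⊆ ⋃ a ∈ D, C a := by
    intro x hx
    have hne : ((fun a : A => a⁻¹ * f x) ⁻¹' O).Nonempty := ⟨f x, by simpa using hO1⟩
    have hopen : IsOpen ((fun a : A => a⁻¹ * f x) ⁻¹' O) :=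
      hOopen.preimage (by continuity)
    obtain ⟨a, haD, haO⟩ := hDd.exists_mem_open hopen hne
    exact Set.mem_biUnion haD ⟨hx, haO⟩
  have hex : ∃ a ∈ D, 0 < μ (C a) := by
    by_contra h
    push_neg at h
    have : μ B = 0 := by
      refine measure_mono_null hcover ?_
      refine (measure_biUnion_null_iff hDc).2 fun a ha => le_antisymm (h a ha) bot_le
    exact absurd this hBpos.ne'
  obtain ⟨a, _, hapos⟩ := hex
  -- apply recurrence of φ to C a with neighbourhood W
  obtain ⟨N, hN, hNpos⟩ := hrec (C a) (hCmeas a) hapos W hW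
  refine ⟨N, hN, ?_⟩
  set S := C a ∩ T^[N] ⁻¹' (C a) ∩ {x | cocycleIterate T φ N x ∈ W} with hS
  set G := {x | ∀ n : ℕ, cocycleIterate T ψ n x = cocycleIterate T φ n x * (f x / f (T^[n] x))}
    with hG
  have hGc : μ Gᶜ = 0 := hae
  have hsubset : S ∩ G ⊆ B ∩ T^[N] ⁻¹' B ∩ {x | cocycleIterate T ψ N x ∈ V} := by
    rintro x ⟨⟨⟨⟨hxB, hxO⟩, hxT⟩, hxW⟩, hxG⟩
    obtain ⟨hxTB, hxTO⟩ := hxT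
    refine ⟨⟨hxB, hxTB⟩, ?_⟩
    have := hxG N
    have hval : cocycleIterate T ψ N x =
        cocycleIterate T φ N x * ((a⁻¹ * f x) / (a⁻¹ * f (T^[N] x))) := by
      rw [this, mul_div_mul_left_eq_div]
    rw [Set.mem_setOf_eq, hval, ← mul_div_assoc]
    exact key _ hxW _ hxO _ hxTO
  calc (0 : ENNReal) < μ S := hNpos
    _ = μ (S ∩ G) := (measure_inter_conull hGc).symm
    _ ≤ _ := measure_mono hsubset
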